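/- Let h: [0,∞) → [0,∞) be measurable and locally bounded, and for each n and k ≤ N let tₖ ∈ [0,∞), wₖ, dₖ ∈ [0,∞]. Then for t ≥ 0, ∫₀ᵗ Σ_{k=1}^{N(s)} h(s − tₖ)·1_{s − tₖ < wₖ ∧ dₖ} ds = Σ_{k=1}^{N(t)} ∫₀^{(t − tₖ)⁺ ∧ wₖ ∧ dₖ} h(u) du, where N(s) = #{k : tₖ ≤ s} for a nondecreasing sequence (tₖ). -/

import Mathlib

open Set intervalIntegral ENNReal

/-- Fubini/change-of-variables identity for the compensator of the abandonment process:
`∫₀ᵗ ∑_{k=1}^{N(s)} h(s − tₖ) 1_{s − tₖ < wₖ ∧ dₖ} ds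
  = ∑_{k=1}^{N(t)} ∫₀^{(t−tₖ)⁺ ∧ wₖ ∧ dₖ} h(u) du`,
where `N(s) = #{k ≥ 1 : tₖ ≤ s}` for a nondecreasing sequence `(tₖ) ⊆ [0,∞)` and
`wₖ, dₖ ∈ [0,∞]`. -/
theorem stmt_19 (h : ℝ → ℝ) (hmeas : Measurable h) (hnn : ∀ u, 0 ≤ h u)
    (hlocbdd : ∀ b : ℝ, ∃ C, ∀ x ∈ Icc (0:ℝ) b, |h x| ≤ C)
    (tk : ℕ → ℝ) (htk0 : ∀ k, 0 ≤ tk k) (htkmono : Monotone tk)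
    (w d : ℕ → ℝ≥0∞) (N : ℝ → ℕ)
    (hN : ∀ s : ℝ, ∀ k, 1 ≤ k → (tk k ≤ s ↔ k ≤ N s)) :
    ∀ t ≥ (0:ℝ),
      (∫ s in (0:ℝ)..t,
          ∑ k ∈ Finset.Icc 1 (N s),
            if ENNReal.ofReal (s - tk k) < w k ⊓ d k then h (s - tk k) else 0) =
        ∑ k ∈ Finset.Icc 1 (N t),
          ∫ u in (0:ℝ)..(ENNReal.ofReal (max (t - tk k) 0) ⊓ w k ⊓ d k).toReal, h u := by
  intro t ht
  obtain ⟨C, hC⟩ := hlocbdd t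
  set C' : ℝ := max C 0 with hC'
  set F : ℕ → ℝ → ℝ := fun k u => if ENNReal.ofReal u < w k ⊓ d k then h u else 0 with hFdef
  set g : ℕ → ℝ → ℝ := fun k s => if tk k ≤ s then F k (s - tk k) else 0 with hgdef
  -- measurability
  have hFmeas : ∀ k, Measurable (F k) := by
    intro k
    apply Measurable.ite _ hmeas measurable_const
    exact ENNReal.measurable_ofReal (measurableSet_Iio (a := w k ⊓ d k))
  have hgmeas : ∀ k, Measurable (g k) := by
    intro k
    apply Measurable.ite measurableSet_Ici ((hFmeas k).comp (measurable_id.sub_const _)) measurable_const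
  -- bound for F
  have hFbd : ∀ k u, 0 ≤ u → u ≤ t → |F k u| ≤ C' := by
    intro k u hu0 hut
    simp only [hFdef]
    split
    · exact le_trans (hC u ⟨hu0, hut⟩) (le_max_left _ _)
    · rw [abs_zero]; exact le_max_right C 0
  have hFii : ∀ k, IntervalIntegrable (F k) MeasureTheory.volume 0 t := by
    intro k
    rw [intervalIntegrable_iff_integrableOn_Ioc_of_le ht]
    refine ⟨(hFmeas k).aestronglyMeasurable, MeasureTheory.HasFiniteIntegral.restrict_of_bounded (C := C') measure_Ioc_lt_top ?_⟩
    filter_upwards [MeasureTheory.ae_restrict_mem measurableSet_Ioc] with u hu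
    simpa using hFbd k u hu.1.le hu.2
  have hgii : ∀ k, IntervalIntegrable (g k) MeasureTheory.volume 0 t := by
    intro k
    rw [intervalIntegrable_iff_integrableOn_Ioc_of_le ht]
    refine ⟨(hgmeas k).aestronglyMeasurable, MeasureTheory.HasFiniteIntegral.restrict_of_bounded (C := C') measure_Ioc_lt_top ?_⟩
    filter_upwards [MeasureTheory.ae_restrict_mem measurableSet_Ioc] with s hs
    simp only [hgdef, Real.norm_eq_abs]
    split_ifs with hguard
    · exact hFbd k _ (by linarith [hs.1.le]) (by have := htk0 k; linarith [hs.2])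
    · rw [abs_zero]; exact le_max_right C 0
  -- monotonicity of N
  have hNmono : ∀ s, s ≤ t → N s ≤ N t := by
    intro s hs
    rcases Nat.eq_zero_or_pos (N s) with h0 | hpos
    · simp [h0]
    · exact (hN t (N s) hpos).1 (le_trans ((hN s (N s) hpos).2 le_rfl) hs)
  have hne : ∀ c : ℝ, ∀ᵐ s : ℝ, s ≠ c := by
    intro c
    rw [MeasureTheory.ae_iff]
    simpa using MeasureTheory.measure_singleton (μ := MeasureTheory.volume) c
  calc
    (∫ s in (0:ℝ)..t,
        ∑ k ∈ Finset.Icc 1 (N s),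
          if ENNReal.ofReal (s - tk k) < w k ⊓ d k then h (s - tk k) else 0)
      = ∫ s in (0:ℝ)..t, ∑ k ∈ Finset.Icc 1 (N t), g k s := by
        apply intervalIntegral.integral_congr
        intro s hs
        rw [uIcc_of_le ht] at hs
        have h1 : ∀ k ∈ Finset.Icc 1 (N s),
            (if ENNReal.ofReal (s - tk k) < w k ⊓ d k then h (s - tk k) else 0) = g k s := by
          intro k hk
          simp only [Finset.mem_Icc] at hk
          have : tk k ≤ s := (hN s k hk.1).2 hk.2
          simp [hgdef, hFdef, this]
        dsimp only
        rw [Finset.sum_congr rfl h1]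
        apply Finset.sum_subset (Finset.Icc_subset_Icc_right (hNmono s hs.2))
        intro k hk hk'
        simp only [Finset.mem_Icc] at hk hk'
        have hks : ¬ tk k ≤ s := fun hle => hk' ⟨hk.1, (hN s k hk.1).1 hle⟩
        simp [hgdef, hks]
    _ = ∑ k ∈ Finset.Icc 1 (N t), ∫ s in (0:ℝ)..t, g k s :=
        intervalIntegral.integral_finset_sum (fun k _ => hgii k)
    _ = ∑ k ∈ Finset.Icc 1 (N t),
          ∫ u in (0:ℝ)..(ENNReal.ofReal (max (t - tk k) 0) ⊓ w k ⊓ d k).toReal, h u := by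
        apply Finset.sum_congr rfl
        intro k hk
        simp only [Finset.mem_Icc] at hk
        have htkt : tk k ≤ t := (hN t k hk.1).2 hk.2
        set T : ℝ := t - tk k with hTdef
        have hT0 : 0 ≤ T := by simp only [hTdef]; linarith
        have hmax : max (t - tk k) 0 = T := max_eq_left hT0
        set m : ℝ≥0∞ := w k ⊓ d k with hmdef
        -- split integral at tk k
        have hii1 : IntervalIntegrable (g k) MeasureTheory.volume 0 (tk k) :=
          (hgii k).mono_set (uIcc_subset_uIcc (by rw [uIcc_of_le ht]; exact ⟨le_rfl, ht⟩)
            (by rw [uIcc_of_le ht]; exact ⟨htk0 k, htkt⟩))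
        have hii2 : IntervalIntegrable (g k) MeasureTheory.volume (tk k) t :=
          (hgii k).mono_set (uIcc_subset_uIcc (by rw [uIcc_of_le ht]; exact ⟨htk0 k, htkt⟩)
            (by rw [uIcc_of_le ht]; exact ⟨ht, le_rfl⟩))
        have hsplit : (∫ s in (0:ℝ)..t, g k s)
            = (∫ s in (0:ℝ)..tk k, g k s) + ∫ s in (tk k)..t, g k s :=
          (intervalIntegral.integral_add_adjacent_intervals hii1 hii2).symm
        have hz : (∫ s in (0:ℝ)..tk k, g k s) = 0 := by
          rw [intervalIntegral.integral_congr_ae (g := fun _ => (0:ℝ)), intervalIntegral.integral_zero]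
          filter_upwards [hne (tk k)] with s hs hmem
          rw [uIoc_of_le (htk0 k)] at hmem
          have : ¬ tk k ≤ s := fun hle => hs (le_antisymm hmem.2 hle)
          simp [hgdef, this]
        have hmain : (∫ s in (tk k)..t, g k s) = ∫ u in (0:ℝ)..T, F k u := by
          rw [intervalIntegral.integral_congr (g := fun s => F k (s - tk k))]
          · rw [intervalIntegral.integral_comp_sub_right (F k) (tk k), sub_self]
          · intro s hs
            rw [uIcc_of_le htkt] at hs
            simp [hgdef, hs.1]
        rw [hsplit, hz, hmain, zero_add, hmax]
        -- now compute ∫ 0..T F k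
        rw [inf_assoc, ← hmdef]
        by_cases hmtop : m = ⊤
        · rw [hmtop, inf_top_eq, ENNReal.toReal_ofReal hT0]
          apply intervalIntegral.integral_congr
          intro u _
          have hlt : ENNReal.ofReal u < w k ⊓ d k := by
            rw [← hmdef, hmtop]; exact ENNReal.ofReal_lt_top
          simp only [hFdef]; rw [if_pos hlt]
        · set m' : ℝ := m.toReal with hm'def
          have hm'0 : 0 ≤ m' := ENNReal.toReal_nonneg
          have hofm' : ENNReal.ofReal m' = m := ENNReal.ofReal_toReal hmtop
          by_cases hTm : T ≤ m'
          · have hinf : ENNReal.ofReal T ⊓ m = ENNReal.ofReal T :=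
              inf_eq_left.2 (ENNReal.ofReal_le_of_le_toReal hTm)
            rw [hinf, ENNReal.toReal_ofReal hT0]
            apply intervalIntegral.integral_congr_ae
            filter_upwards [hne m'] with u hu hmem
            rw [uIoc_of_le hT0] at hmem
            have hum' : u < m' := lt_of_le_of_ne (le_trans hmem.2 hTm) hu
            have hlt : ENNReal.ofReal u < m := (ENNReal.ofReal_lt_iff_lt_toReal hmem.1.le hmtop).2 hum'
            rw [hmdef] at hlt
            simp only [hFdef]; rw [if_pos hlt]
          · push_neg at hTm
            have hinf : ENNReal.ofReal T ⊓ m = m :=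
              inf_eq_right.2 (by rw [← hofm']; exact ENNReal.ofReal_le_ofReal hTm.le)
            rw [hinf, ← hm'def]
            have hTt : T ≤ t := by rw [hTdef]; linarith [htk0 k]
            have hm't : m' ≤ t := le_trans hTm.le hTt
            have hFii1 : IntervalIntegrable (F k) MeasureTheory.volume 0 m' :=
              (hFii k).mono_set (uIcc_subset_uIcc (by rw [uIcc_of_le ht]; exact ⟨le_rfl, ht⟩)
                (by rw [uIcc_of_le ht]; exact ⟨hm'0, hm't⟩))
            have hFii2 : IntervalIntegrable (F k) MeasureTheory.volume m' T :=
              (hFii k).mono_set (uIcc_subset_uIcc (by rw [uIcc_of_le ht]; exact ⟨hm'0, hm't⟩)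
                (by rw [uIcc_of_le ht]; exact ⟨hT0, hTt⟩))
            rw [← intervalIntegral.integral_add_adjacent_intervals hFii1 hFii2]
            have h2 : (∫ u in m'..T, F k u) = 0 := by
              rw [intervalIntegral.integral_congr (g := fun _ => (0:ℝ)), intervalIntegral.integral_zero]
              intro u hu
              rw [uIcc_of_le hTm.le] at hu
              have hlt : ¬ ENNReal.ofReal u < m := by
                rw [← hofm']
                exact not_lt.2 (ENNReal.ofReal_le_ofReal hu.1)
              rw [hmdef] at hlt
              simp only [hFdef]; rw [if_neg hlt]
            rw [h2, add_zero]
            apply intervalIntegral.integral_congr_ae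
            filter_upwards [hne m'] with u hu hmem
            rw [uIoc_of_le hm'0] at hmem
            have hum' : u < m' := lt_of_le_of_ne hmem.2 hu
            have hlt : ENNReal.ofReal u < m := (ENNReal.ofReal_lt_iff_lt_toReal hmem.1.le hmtop).2 hum'
            rw [hmdef] at hlt
            simp only [hFdef]; rw [if_pos hlt]
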